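/- Let D ≥ 2 be a natural number and α ≥ 2 a real number, and set b := 2^{max(1, ⌈log₂((log₂ α)/(log₂ D))⌉ + 2)}. Let x : ℕ → ℝ satisfy x_i ≥ 0 for all i and x_i = 0 for all i > D, and suppose s_0 ≥ 1 and ∑_{i=0}^{D} x_i ≤ α. Then the number of natural numbers j with 0.01·log₂ D ≤ j ≤ 0.1·log₂ D for which S_{2^{−j}} > 1024 · b · 2^j is at most 0.02·log₂ D. -/

import Mathlib

open Finset Real Classical

lemma jensen_step (n : ℕ) (x : ℕ → ℝ) (hx : ∀ i, 0 ≤ x i) (β : ℝ)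
    (hB : 0 < ∑ i ∈ Finset.range n, x i * Real.exp (-(i:ℝ) * β)) :
    (∑ i ∈ Finset.range n, x i * Real.exp (-(i:ℝ) * β)) *
      Real.exp ((β/2) * ((∑ i ∈ Finset.range n, (i:ℝ) * x i * Real.exp (-(i:ℝ) * β)) /
        (∑ i ∈ Finset.range n, x i * Real.exp (-(i:ℝ) * β))))
    ≤ ∑ i ∈ Finset.range n, x i * Real.exp (-(i:ℝ) * (β/2)) := by
  set B := ∑ i ∈ Finset.range n, x i * Real.exp (-(i:ℝ) * β) with hBdef
  set w : ℕ → ℝ := fun i => x i * Real.exp (-(i:ℝ) * β) / B with hw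
  have hw0 : ∀ i ∈ Finset.range n, 0 ≤ w i := fun i _ =>
    div_nonneg (mul_nonneg (hx i) (Real.exp_pos _).le) hB.le
  have hw1 : ∑ i ∈ Finset.range n, w i = 1 := by
    rw [hw, ← Finset.sum_div, div_self hB.ne']
  have key := convexOn_exp.map_sum_le (p := fun i : ℕ => (i:ℝ) * (β/2)) hw0 hw1
    (fun i _ => Set.mem_univ _)
  simp only [smul_eq_mul] at key
  have h1 : ∑ i ∈ Finset.range n, w i * ((i:ℝ) * (β/2)) =
      (β/2) * ((∑ i ∈ Finset.range n, (i:ℝ) * x i * Real.exp (-(i:ℝ) * β)) / B) := by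
    have : ∀ i ∈ Finset.range n, w i * ((i:ℝ) * (β/2)) =
        (β/2) * (((i:ℝ) * x i * Real.exp (-(i:ℝ) * β)) / B) := by
      intro i _; rw [hw]; ring
    rw [Finset.sum_congr rfl this, ← Finset.mul_sum, ← Finset.sum_div]
  have h2 : ∑ i ∈ Finset.range n, w i * Real.exp ((i:ℝ) * (β/2)) =
      (∑ i ∈ Finset.range n, x i * Real.exp (-(i:ℝ) * (β/2))) / B := by
    have : ∀ i ∈ Finset.range n, w i * Real.exp ((i:ℝ) * (β/2)) =
        (x i * Real.exp (-(i:ℝ) * (β/2))) / B := by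
      intro i _
      have he : Real.exp (-(i:ℝ)*β) * Real.exp ((i:ℝ)*(β/2)) = Real.exp (-(i:ℝ)*(β/2)) := by
        rw [← Real.exp_add]; ring_nf
      rw [hw, div_mul_eq_mul_div, mul_assoc, he]
    rw [Finset.sum_congr rfl this, ← Finset.sum_div]
  rw [h1, h2] at key
  calc B * Real.exp ((β/2) * ((∑ i ∈ Finset.range n, (i:ℝ) * x i * Real.exp (-(i:ℝ) * β)) / B))
      ≤ B * ((∑ i ∈ Finset.range n, x i * Real.exp (-(i:ℝ) * (β/2))) / B) := by
        exact mul_le_mul_of_nonneg_left key hB.le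
    _ = _ := by field_simp; simp only [mul_comm β]

/-- Deterministic core of Theorem 2 (`thm:cprop`): the number of integers `j`
with `0.01·log₂ D ≤ j ≤ 0.1·log₂ D` for which `S_{2^{-j}} > 1024·b·2^j` is at
most `0.02·log₂ D`, where `b = 2^(max(1, ⌈log₂(log₂ α / log₂ D)⌉ + 2))`. -/
theorem stmt_14 (D : ℕ) (hD : 2 ≤ D) (α : ℝ) (hα : 2 ≤ α)
    (b : ℝ)
    (hb : b = (2 : ℝ) ^ (max 1 (⌈Real.logb 2 (Real.logb 2 α / Real.logb 2 D)⌉ + 2) : ℤ))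
    (x : ℕ → ℝ) (hx : ∀ i, 0 ≤ x i) (hxD : ∀ i, D < i → x i = 0)
    (hs0 : 1 ≤ ∑ i ∈ Finset.range (2 ^ (0 + 1) + 1), x i)
    (hsum : ∑ i ∈ Finset.range (D + 1), x i ≤ α) :
    (((Finset.range (D + 1)).filter (fun j : ℕ =>
        0.01 * Real.logb 2 D ≤ (j : ℝ) ∧ (j : ℝ) ≤ 0.1 * Real.logb 2 D ∧
        1024 * b * 2 ^ j <
          (∑ i ∈ Finset.range (D + 1),
              (i : ℝ) * x i * Real.exp (-(i : ℝ) * 2 ^ (-(j : ℝ)))) /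
            (∑ i ∈ Finset.range (D + 1),
              x i * Real.exp (-(i : ℝ) * 2 ^ (-(j : ℝ)))))).card : ℝ)
      ≤ 0.02 * Real.logb 2 D := by
  have hb2 : (2:ℝ) ≤ b := by
    rw [hb]
    calc (2:ℝ) = 2 ^ (1:ℤ) := by norm_num
      _ ≤ _ := by
        apply zpow_le_zpow_right₀ (by norm_num)
        exact le_max_left _ _
  have hb0 : (0:ℝ) < b := by linarith
  -- basic facts about B
  set Bf : ℝ → ℝ := fun β => ∑ i ∈ Finset.range (D+1), x i * Real.exp (-(i:ℝ) * β) with hBf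
  set Tf : ℝ → ℝ := fun β => ∑ i ∈ Finset.range (D+1), (i:ℝ) * x i * Real.exp (-(i:ℝ) * β)
    with hTf
  have hBlow : ∀ β : ℝ, 0 ≤ β → Real.exp (-2*β) ≤ Bf β := by
    intro β hβ
    have hsub : Finset.range 3 ⊆ Finset.range (D+1) := by
      apply Finset.range_subset_range.2; omega
    have h1 : ∑ i ∈ Finset.range 3, x i * Real.exp (-(i:ℝ) * β) ≤ Bf β := by
      apply Finset.sum_le_sum_of_subset_of_nonneg hsub
      intro i _ _
      exact mul_nonneg (hx i) (Real.exp_pos _).le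
    have h2 : ∑ i ∈ Finset.range 3, x i * Real.exp (-2*β)
        ≤ ∑ i ∈ Finset.range 3, x i * Real.exp (-(i:ℝ) * β) := by
      apply Finset.sum_le_sum
      intro i hi
      apply mul_le_mul_of_nonneg_left _ (hx i)
      apply Real.exp_le_exp.2
      have : (i:ℝ) ≤ 2 := by
        simp only [Finset.mem_range] at hi
        exact_mod_cast Nat.lt_succ_iff.mp hi
      nlinarith
    have h3 : Real.exp (-2*β) ≤ ∑ i ∈ Finset.range 3, x i * Real.exp (-2*β) := by
      rw [← Finset.sum_mul]
      have hs0' : (1:ℝ) ≤ ∑ i ∈ Finset.range 3, x i := by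
        simpa using hs0
      nlinarith [Real.exp_pos (-2*β)]
    linarith
  have hBpos : ∀ β : ℝ, 0 ≤ β → 0 < Bf β := fun β hβ =>
    lt_of_lt_of_le (Real.exp_pos _) (hBlow β hβ)
  have hBupper : ∀ β : ℝ, 0 ≤ β → Bf β ≤ α := by
    intro β hβ
    refine le_trans ?_ hsum
    apply Finset.sum_le_sum
    intro i _
    have : Real.exp (-(i:ℝ) * β) ≤ 1 := by
      apply Real.exp_le_one_iff.2
      have : (0:ℝ) ≤ (i:ℝ) := Nat.cast_nonneg i
      nlinarith
    nlinarith [hx i]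
  have hBmono : ∀ β' β : ℝ, β' ≤ β → Bf β ≤ Bf β' := by
    intro β' β h
    apply Finset.sum_le_sum
    intro i _
    apply mul_le_mul_of_nonneg_left _ (hx i)
    apply Real.exp_le_exp.2
    have : (0:ℝ) ≤ (i:ℝ) := Nat.cast_nonneg i
    nlinarith
  set g : ℕ → ℝ := fun j => Bf ((2:ℝ) ^ (-(j:ℝ))) with hg
  have hβpos : ∀ j : ℕ, (0:ℝ) < (2:ℝ) ^ (-(j:ℝ)) := fun j =>
    Real.rpow_pos_of_pos (by norm_num) _
  have hhalf : ∀ j : ℕ, (2:ℝ) ^ (-((j+1:ℕ):ℝ)) = ((2:ℝ) ^ (-(j:ℝ))) / 2 := by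
    intro j
    push_cast
    rw [neg_add, Real.rpow_add (by norm_num : (0:ℝ) < 2), Real.rpow_neg_one]
    ring
  have hgmono : ∀ j : ℕ, g j ≤ g (j+1) := by
    intro j
    apply hBmono
    apply Real.rpow_le_rpow_of_exponent_le (by norm_num)
    push_cast; linarith
  set F := (Finset.range (D + 1)).filter (fun j : ℕ =>
        0.01 * Real.logb 2 D ≤ (j : ℝ) ∧ (j : ℝ) ≤ 0.1 * Real.logb 2 D ∧
        1024 * b * 2 ^ j <
          (∑ i ∈ Finset.range (D + 1),
              (i : ℝ) * x i * Real.exp (-(i : ℝ) * 2 ^ (-(j : ℝ)))) /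
            (∑ i ∈ Finset.range (D + 1),
              x i * Real.exp (-(i : ℝ) * 2 ^ (-(j : ℝ))))) with hF
  have hbadstep : ∀ j : ℕ, j ∈ F → g j * Real.exp (512 * b) ≤ g (j+1) := by
    intro j hj
    rw [hF, Finset.mem_filter] at hj
    obtain ⟨-, -, -, hj3⟩ := hj
    set β : ℝ := (2:ℝ) ^ (-(j:ℝ)) with hβ
    have hBp : 0 < Bf β := hBpos β (hβpos j).le
    have hj3' : 1024 * b * 2 ^ j < Tf β / Bf β := hj3
    have hβ2j : β * (2:ℝ) ^ (j:ℕ) = 1 := by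
      rw [hβ, ← Real.rpow_natCast 2 j, ← Real.rpow_add (by norm_num : (0:ℝ) < 2)]
      simp
    have harg : 512 * b ≤ (β/2) * (Tf β / Bf β) := by
      have h1 : (β/2) * (1024 * b * 2 ^ j) ≤ (β/2) * (Tf β / Bf β) :=
        mul_le_mul_of_nonneg_left hj3'.le (by positivity)
      have h2 : (β/2) * (1024 * b * 2 ^ j) = 512 * b * (β * 2 ^ j) := by ring
      rw [h2, hβ2j, mul_one] at h1
      exact h1
    have hjen := jensen_step (D+1) x hx β hBp
    have : g j * Real.exp (512 * b) ≤ Bf β * Real.exp ((β/2) * (Tf β / Bf β)) := by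
      exact mul_le_mul_of_nonneg_left (Real.exp_le_exp.2 harg) hBp.le
    refine le_trans this (le_trans hjen ?_)
    have hgj : g (j+1) = Bf (β/2) := by
      show Bf ((2:ℝ) ^ (-(((j+1:ℕ)):ℝ))) = Bf (β/2)
      rw [hhalf j, ← hβ]
    rw [hgj]
  have htele : ∀ n : ℕ, g 0 * Real.exp (512 * b * ((F ∩ Finset.range n).card)) ≤ g n := by
    intro n
    induction n with
    | zero => simp
    | succ n ih =>
      rw [Finset.range_add_one]
      by_cases hn : n ∈ F
      · rw [Finset.inter_insert_of_mem hn,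
          Finset.card_insert_of_notMem (by simp), Nat.cast_add, Nat.cast_one]
        have e1 : g 0 * Real.exp (512 * b * ((F ∩ Finset.range n).card + 1)) =
            (g 0 * Real.exp (512 * b * ((F ∩ Finset.range n).card))) *
              Real.exp (512 * b) := by
          have e2 : 512 * b * (((F ∩ Finset.range n).card : ℝ) + 1) =
              512 * b * ((F ∩ Finset.range n).card : ℝ) + 512 * b := by ring
          rw [e2, Real.exp_add]; ring
        rw [e1]
        calc _ ≤ g n * Real.exp (512 * b) :=
              mul_le_mul_of_nonneg_right ih (Real.exp_pos _).le
          _ ≤ g (n+1) := hbadstep n hn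
      · rw [Finset.inter_insert_of_notMem hn]
        exact le_trans ih (hgmono n)
  have hFsub : F ⊆ Finset.range (D+1) := Finset.filter_subset _ _
  have hcap : F ∩ Finset.range (D+1) = F := Finset.inter_eq_left.mpr hFsub
  have hfinal := htele (D+1)
  rw [hcap] at hfinal
  set m : ℝ := (F.card : ℝ) with hm
  have hm0 : 0 ≤ m := Nat.cast_nonneg _
  have hchain : Real.exp (-2) * Real.exp (512 * b * m) ≤ α := by
    have h1 : Real.exp (-2) ≤ g 0 := by
      have : g 0 = Bf 1 := by rw [hg]; norm_num
      rw [this]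
      have := hBlow 1 (by norm_num)
      simpa using this
    have h2 : g (D+1) ≤ α := hBupper _ (hβpos (D+1)).le
    calc Real.exp (-2) * Real.exp (512 * b * m)
        ≤ g 0 * Real.exp (512 * b * m) :=
          mul_le_mul_of_nonneg_right h1 (Real.exp_pos _).le
      _ ≤ g (D+1) := hfinal
      _ ≤ α := h2
  have hlog : 512 * b * m - 2 ≤ Real.log α := by
    rw [← Real.exp_add] at hchain
    have := (Real.le_log_iff_exp_le (by linarith : (0:ℝ) < α)).2
      (by rw [show (-2) + 512 * b * m = 512 * b * m - 2 by ring] at hchain; exact hchain)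
    exact this
  -- arithmetic
  set L := Real.logb 2 (D:ℝ) with hL
  set A := Real.logb 2 α with hA
  have hL1 : 1 ≤ L := by
    rw [hL]
    calc (1:ℝ) = Real.logb 2 2 := by simp
      _ ≤ _ := Real.logb_le_logb_of_le (by norm_num) (by norm_num) (by exact_mod_cast hD)
  have hA1 : 1 ≤ A := by
    rw [hA]
    calc (1:ℝ) = Real.logb 2 2 := by simp
      _ ≤ _ := Real.logb_le_logb_of_le (by norm_num) (by norm_num) hα
  have hlogα : Real.log α = A * Real.log 2 := by
    rw [hA, Real.logb, div_mul_cancel₀]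
    exact Real.log_ne_zero_of_pos_of_ne_one (by norm_num) (by norm_num)
  have hlog2 : Real.log 2 < 0.6931471808 := Real.log_two_lt_d9
  have hlog2' : 0 < Real.log 2 := Real.log_pos (by norm_num)
  set q := Real.logb 2 (A / L) with hq
  by_cases hc : ⌈q⌉ ≤ -1
  · -- b = 2, A ≤ L/2
    have hq1 : q ≤ -1 := by exact_mod_cast Int.ceil_le.mp hc
    have hAL : A / L ≤ (2:ℝ) ^ (-1:ℝ) := by
      have hALpos : 0 < A / L := div_pos (by linarith) (by linarith)
      exact (Real.logb_le_iff_le_rpow (by norm_num) hALpos).1 (by exact_mod_cast hq1)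
    have hAL2 : A ≤ L / 2 := by
      rw [Real.rpow_neg_one] at hAL
      have := (div_le_iff₀ (by linarith : (0:ℝ) < L)).1 hAL
      linarith
    have hbval : b = 2 := by
      rw [hb]
      have h1 : max 1 (⌈q⌉ + 2) = 1 := by omega
      rw [h1]; norm_num
    rw [hbval] at hlog
    rw [hlogα] at hlog
    have k1 : A * Real.log 2 ≤ (L/2) * Real.log 2 :=
      mul_le_mul_of_nonneg_right hAL2 hlog2'.le
    have k2 : (L/2) * Real.log 2 ≤ (L/2) * 0.6931471808 :=
      mul_le_mul_of_nonneg_left hlog2.le (by linarith)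
    linarith
  · -- b ≥ 4 A / L
    push_neg at hc
    have hc0 : 0 ≤ ⌈q⌉ := by omega
    have hALpos : 0 < A / L := div_pos (by linarith) (by linarith)
    have hbval : b = (2:ℝ) ^ ((⌈q⌉:ℝ) + 2) := by
      rw [hb]
      have hmax : max 1 (⌈q⌉ + 2) = ⌈q⌉ + 2 := by omega
      rw [hmax, ← Real.rpow_intCast]
      push_cast
      ring_nf
    have hblow : 4 * (A / L) ≤ b := by
      rw [hbval]
      have h1 : (2:ℝ) ^ (q + 2) ≤ (2:ℝ) ^ ((⌈q⌉:ℝ) + 2) := by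
        apply Real.rpow_le_rpow_of_exponent_le (by norm_num)
        have := Int.le_ceil q
        linarith
      have h2 : (2:ℝ) ^ (q + 2) = 4 * (A / L) := by
        rw [Real.rpow_add (by norm_num : (0:ℝ) < 2), hq,
          Real.rpow_logb (by norm_num) (by norm_num) hALpos]
        norm_num
        ring
      linarith
    have hbL : 4 * A ≤ b * L := by
      have h1 := mul_le_mul_of_nonneg_right hblow (by linarith : (0:ℝ) ≤ L)
      have he : 4 * (A / L) * L = 4 * A := by
        field_simp
      linarith
    rw [hlogα] at hlog
    -- 512 b m ≤ A log2 + 2 ≤ 0.7 A + 2; want m ≤ 0.02 L; note b*L ≥ 4A ≥ 4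
    -- suppose m > 0.02 L; then 512 b m > 512*b*0.02*L = 10.24 b L ≥ 40.96 A
    by_contra hcon
    push_neg at hcon
    have h512 : 512 * b * (0.02 * L) ≤ 512 * b * m :=
      mul_le_mul_of_nonneg_left hcon.le (by positivity)
    nlinarith [mul_lt_mul_of_pos_left hlog2 (show (0:ℝ) < A by linarith)]
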